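/- Let C ↔ f : [a,b] → ℝ^M (a < b) be a continuous and rectifiable curve and let F be a parametric integrand (a continuous function F : ℝ^M × ℝ^M → ℝ with F(x, K·t) = K·F(x,t) for all K ≥ 0). Then the line integral of F along C exists: there is a real number L such that for every ε > 0 there exists δ > 0 such that for every partition a = x₀ < x₁ < ⋯ < xₙ = b with mesh < δ and every choice of tags ξᵢ ∈ [xᵢ₋₁, xᵢ], |Σᵢ₌₁ⁿ F(f(ξᵢ), f(xᵢ) − f(xᵢ₋₁)) − L| < ε. -/

import Mathlib

open scoped BigOperators ENNReal
open MeasureTheory Filter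

noncomputable section

/-- A partition `a = x 0 < x 1 < ⋯ < x n = b` of the interval `[a,b]`. -/
structure IntervalPartition (a b : ℝ) where
  n : ℕ
  x : Fin (n + 1) → ℝ
  mono : StrictMono x
  first : x 0 = a
  last : x (Fin.last n) = b

/-- The mesh `‖P‖ = maxᵢ (xᵢ − xᵢ₋₁)` of a partition. -/
def IntervalPartition.mesh {a b : ℝ} (P : IntervalPartition a b) : ℝ :=
  ⨆ i : Fin P.n, (P.x i.succ - P.x i.castSucc)

/-- The inscribed sum `V(f;P) = Σᵢ ‖f(xᵢ) − f(xᵢ₋₁)‖`. -/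
def inscribedSum {M : ℕ} (f : ℝ → EuclideanSpace ℝ (Fin M)) {a b : ℝ}
    (P : IntervalPartition a b) : ℝ :=
  ∑ i : Fin P.n, ‖f (P.x i.succ) - f (P.x i.castSucc)‖

/-- The length `ℓ(C)` of the curve `C ↔ f : [a,b] → ℝ^M`: the supremum of the inscribed sums
over all partitions of `[a,b]`, a value in `[0,+∞]`. -/
def curveLength {M : ℕ} (f : ℝ → EuclideanSpace ℝ (Fin M)) (a b : ℝ) : ℝ≥0∞ :=
  ⨆ P : IntervalPartition a b, ENNReal.ofReal (inscribedSum f P)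

/-- The total variation `T_h[a,b]` of a real function `h` on `[a,b]`. -/
def totalVariation (h : ℝ → ℝ) (a b : ℝ) : ℝ≥0∞ :=
  ⨆ P : IntervalPartition a b, ENNReal.ofReal (∑ i : Fin P.n, |h (P.x i.succ) - h (P.x i.castSucc)|)

/-- The positive variation `T_h⁺[a,b]` of a real function `h` on `[a,b]`. -/
def posVariation (h : ℝ → ℝ) (a b : ℝ) : ℝ≥0∞ :=
  ⨆ P : IntervalPartition a b,
    ENNReal.ofReal (∑ i : Fin P.n, max (h (P.x i.succ) - h (P.x i.castSucc)) 0)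

/-- The negative variation `T_h⁻[a,b]` of a real function `h` on `[a,b]`. -/
def negVariation (h : ℝ → ℝ) (a b : ℝ) : ℝ≥0∞ :=
  ⨆ P : IntervalPartition a b,
    ENNReal.ofReal (∑ i : Fin P.n, max (h (P.x i.castSucc) - h (P.x i.succ)) 0)

/-- `h` is absolutely continuous on `[a,b]`: for every `ε > 0` there is `δ > 0` such that
`Σᵢ |h(vᵢ) − h(uᵢ)| < ε` for every finite family of pairwise non-overlapping subintervals
`[uᵢ,vᵢ]` of `[a,b]` of total length `< δ`. -/
def AbsContOn (h : ℝ → ℝ) (a b : ℝ) : Prop :=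
  ∀ ε > (0 : ℝ), ∃ δ > (0 : ℝ), ∀ n : ℕ, ∀ u v : Fin n → ℝ,
    (∀ i, a ≤ u i ∧ u i ≤ v i ∧ v i ≤ b) →
    (∀ i j, i ≠ j → Set.Ioo (u i) (v i) ∩ Set.Ioo (u j) (v j) = ∅) →
    (∑ i, (v i - u i)) < δ → (∑ i, |h (v i) - h (u i)|) < ε

/-- `φ` is an increasing homeomorphism of `[a,b]` onto `[c,d]` sending `a` to `c` and `b` to `d`. -/
def IsIncrHomeo (φ : ℝ → ℝ) (a b c d : ℝ) : Prop :=
  ContinuousOn φ (Set.Icc a b) ∧ StrictMonoOn φ (Set.Icc a b) ∧ φ a = c ∧ φ b = d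

/-- `f : [a,b] → ℝ^M` and `g : [c,d] → ℝ^M` are Fréchet equivalent. -/
def FrechetEquiv {M : ℕ} (f : ℝ → EuclideanSpace ℝ (Fin M)) (a b : ℝ)
    (g : ℝ → EuclideanSpace ℝ (Fin M)) (c d : ℝ) : Prop :=
  ∀ ε > (0 : ℝ), ∃ φ : ℝ → ℝ, IsIncrHomeo φ a b c d ∧
    ∀ x ∈ Set.Icc a b, ‖f x - g (φ x)‖ < ε

/-- The Fréchet distance between the curves `C ↔ f : [a,b] → ℝ^M` and `D ↔ g : [c,d] → ℝ^M`. -/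
def frechetDist {M : ℕ} (f : ℝ → EuclideanSpace ℝ (Fin M)) (a b : ℝ)
    (g : ℝ → EuclideanSpace ℝ (Fin M)) (c d : ℝ) : ℝ :=
  ⨅ φ : {φ : ℝ → ℝ // IsIncrHomeo φ a b c d}, ⨆ x ∈ Set.Icc a b, ‖f x - g (φ.1 x)‖

/-- A parametric integrand: a continuous `F : ℝ^M × ℝ^M → ℝ` positively homogeneous of
degree 1 in the second variable. -/
def IsParametricIntegrand {M : ℕ}
    (F : EuclideanSpace ℝ (Fin M) → EuclideanSpace ℝ (Fin M) → ℝ) : Prop :=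
  Continuous (fun p : EuclideanSpace ℝ (Fin M) × EuclideanSpace ℝ (Fin M) => F p.1 p.2) ∧
  ∀ K : ℝ, 0 ≤ K → ∀ x t, F x (K • t) = K * F x t

/-- `L` is the line integral `∫_C F` of `F` along the curve `C ↔ f : [a,b] → ℝ^M`:
the limit, as the mesh tends to `0`, of the Riemann-type sums
`Σᵢ F(f(ξᵢ), f(xᵢ) − f(xᵢ₋₁))` over tagged partitions of `[a,b]`. -/
def IsLineIntegral {M : ℕ} (F : EuclideanSpace ℝ (Fin M) → EuclideanSpace ℝ (Fin M) → ℝ)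
    (f : ℝ → EuclideanSpace ℝ (Fin M)) (a b : ℝ) (L : ℝ) : Prop :=
  ∀ ε > (0 : ℝ), ∃ δ > (0 : ℝ), ∀ P : IntervalPartition a b, P.mesh < δ →
    ∀ ξ : Fin P.n → ℝ, (∀ i, ξ i ∈ Set.Icc (P.x i.castSucc) (P.x i.succ)) →
    |(∑ i : Fin P.n, F (f (ξ i)) (f (P.x i.succ) - f (P.x i.castSucc))) - L| < ε

namespace IntervalPartition
variable {a b : ℝ} (P : IntervalPartition a b)

/-- Clamped ℕ-indexed points. -/
def y (k : ℕ) : ℝ := if h : k ≤ P.n then P.x ⟨k, Nat.lt_succ_of_le h⟩ else b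

lemma y_eq {k : ℕ} (h : k ≤ P.n) : P.y k = P.x ⟨k, Nat.lt_succ_of_le h⟩ := dif_pos h

lemma x_eq_y (i : Fin (P.n + 1)) : P.x i = P.y i.val := by
  rw [y_eq P (Nat.lt_succ_iff.mp i.isLt)]

lemma y_zero : P.y 0 = a := by rw [y_eq P (Nat.zero_le _)]; exact P.first

lemma y_last : P.y P.n = b := by rw [y_eq P le_rfl]; exact P.last

lemma y_le_b (k : ℕ) : P.y k ≤ b := by
  by_cases h : k ≤ P.n
  · have h2 : (⟨k, Nat.lt_succ_of_le h⟩ : Fin (P.n + 1)) ≤ Fin.last P.n := by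
      simp [Fin.le_def, Fin.last]; exact h
    have h3 := P.mono.monotone h2
    rw [P.last] at h3
    rw [y_eq P h]; exact h3
  · simp [y, h]

lemma y_strictMonoOn {j k : ℕ} (hjk : j < k) (hk : k ≤ P.n) : P.y j < P.y k := by
  rw [y_eq P (le_of_lt (lt_of_lt_of_le hjk hk)), y_eq P hk]
  exact P.mono (by simp [Fin.lt_def]; omega)

lemma y_mono : Monotone P.y := by
  intro j k hjk
  rcases eq_or_lt_of_le hjk with rfl | h
  · exact le_rfl
  by_cases hk : k ≤ P.n
  · exact le_of_lt (P.y_strictMonoOn h hk)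
  · by_cases hj : j ≤ P.n
    · calc P.y j ≤ P.y P.n := by
            rcases eq_or_lt_of_le hj with rfl | h2
            · exact le_rfl
            · exact le_of_lt (P.y_strictMonoOn h2 le_rfl)
          _ = b := P.y_last
          _ = P.y k := by simp [y, hk]
    · simp [y, hj, hk]

lemma a_le_y (k : ℕ) : a ≤ P.y k := by
  have h := P.y_mono (Nat.zero_le k)
  rw [P.y_zero] at h; exact h

lemma y_mem_Icc (k : ℕ) : P.y k ∈ Set.Icc a b := ⟨P.a_le_y k, P.y_le_b k⟩

lemma n_pos (hab : a < b) : 0 < P.n := by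
  rcases Nat.eq_zero_or_pos P.n with h | h
  · exfalso
    have h1 := P.first
    have h2 := P.last
    have h3 : Fin.last P.n = (0 : Fin (P.n + 1)) := by ext; simp [h]
    rw [h3, h1] at h2
    exact absurd h2 (ne_of_lt hab)
  · exact h

lemma gap_le_mesh {k : ℕ} (hk : k < P.n) : P.y (k + 1) - P.y k ≤ P.mesh := by
  show P.y (k + 1) - P.y k ≤ ⨆ i : Fin P.n, (P.x i.succ - P.x i.castSucc)
  have hb : BddAbove (Set.range fun i : Fin P.n => P.x i.succ - P.x i.castSucc) :=
    (Set.finite_range _).bddAbove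
  have h1 := le_ciSup hb (⟨k, hk⟩ : Fin P.n)
  have e1 : P.x (Fin.succ ⟨k, hk⟩) = P.y (k + 1) := P.x_eq_y _
  have e2 : P.x (Fin.castSucc ⟨k, hk⟩) = P.y k := P.x_eq_y _
  rw [e1, e2] at h1
  exact h1

lemma mesh_nonneg (hab : a < b) : 0 ≤ P.mesh := by
  have h1 : 0 < P.n := P.n_pos hab
  have := P.gap_le_mesh h1
  have h2 : P.y 0 < P.y 1 := P.y_strictMonoOn Nat.zero_lt_one h1
  linarith

/-- inscribedSum in terms of `y`. -/
lemma inscribedSum_eq {M : ℕ} (f : ℝ → EuclideanSpace ℝ (Fin M)) :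
    inscribedSum f P = ∑ k ∈ Finset.range P.n, ‖f (P.y (k + 1)) - f (P.y k)‖ := by
  rw [inscribedSum, ← Fin.sum_univ_eq_sum_range (fun k => ‖f (P.y (k + 1)) - f (P.y k)‖) P.n]
  refine Finset.sum_congr rfl fun i _ => ?_
  rw [x_eq_y, x_eq_y, Fin.val_succ, Fin.coe_castSucc]

end IntervalPartition

-- chain helper lemmas
lemma step_mono {c : ℕ → ℕ} {m : ℕ} (hc : ∀ i < m, c i ≤ c (i + 1)) :
    ∀ {i j : ℕ}, i ≤ j → j ≤ m → c i ≤ c j := by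
  intro i j hij hjm
  induction j with
  | zero => simp_all
  | succ j ih =>
    rcases Nat.eq_or_lt_of_le hij with rfl | h
    · exact le_rfl
    · exact le_trans (ih (Nat.lt_succ_iff.mp h) (by omega)) (hc j (by omega))

lemma sum_Ico_chain {α : Type*} [AddCommMonoid α] (g : ℕ → α) (c : ℕ → ℕ) (m : ℕ)
    (hc : ∀ i < m, c i ≤ c (i + 1)) :
    ∑ i ∈ Finset.range m, ∑ j ∈ Finset.Ico (c i) (c (i + 1)), g j
      = ∑ j ∈ Finset.Ico (c 0) (c m), g j := by
  induction m with
  | zero => simp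
  | succ m ih =>
    rw [Finset.sum_range_succ, ih (fun i hi => hc i (by omega)),
      Finset.sum_Ico_consecutive g (step_mono hc (Nat.zero_le m) (by omega)) (hc m (by omega))]

lemma sum_Ico_telescope {α : Type*} [AddCommGroup α] (g : ℕ → α) {l r : ℕ} (h : l ≤ r) :
    ∑ j ∈ Finset.Ico l r, (g (j + 1) - g j) = g r - g l := by
  rw [Finset.sum_Ico_eq_sub _ h, Finset.sum_range_sub, Finset.sum_range_sub]
  abel

namespace IntervalPartition
variable {a b : ℝ}

def points (P : IntervalPartition a b) : Finset ℝ := Finset.image P.x Finset.univ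

lemma mem_points_iff (P : IntervalPartition a b) (t : ℝ) :
    t ∈ P.points ↔ ∃ i : Fin (P.n + 1), P.x i = t := by
  simp [points]

lemma y_mem_points (P : IntervalPartition a b) {k : ℕ} (hk : k ≤ P.n) : P.y k ∈ P.points := by
  rw [mem_points_iff]
  exact ⟨⟨k, Nat.lt_succ_of_le hk⟩, (P.y_eq hk).symm⟩

lemma a_mem_points (P : IntervalPartition a b) : a ∈ P.points := by
  have := P.y_mem_points (Nat.zero_le P.n)
  rwa [P.y_zero] at this

lemma b_mem_points (P : IntervalPartition a b) : b ∈ P.points := by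
  have := P.y_mem_points (le_refl P.n)
  rwa [P.y_last] at this

lemma points_subset_Icc (P : IntervalPartition a b) : ∀ t ∈ P.points, t ∈ Set.Icc a b := by
  intro t ht
  rw [mem_points_iff] at ht
  obtain ⟨i, rfl⟩ := ht
  rw [P.x_eq_y]
  exact P.y_mem_Icc i.val

lemma card_points (P : IntervalPartition a b) : P.points.card = P.n + 1 := by
  rw [points, Finset.card_image_of_injective _ P.mono.injective, Finset.card_univ, Fintype.card_fin]

/-- IntervalPartition from a finite set of points containing `a`, `b`, inside `[a,b]`. -/
def ofFinset (a b : ℝ) (S : Finset ℝ) (ha : a ∈ S) (hb : b ∈ S)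
    (hS : ∀ t ∈ S, t ∈ Set.Icc a b) :
    IntervalPartition a b where
  n := S.card - 1
  x := fun i => (S.orderIsoOfFin (by
      have : 0 < S.card := Finset.card_pos.mpr ⟨a, ha⟩
      omega) i : ℝ)
  mono := fun i j hij => by
    exact_mod_cast (S.orderIsoOfFin _).strictMono hij
  first := by
    set e := S.orderIsoOfFin (show S.card = S.card - 1 + 1 by
      have : 0 < S.card := Finset.card_pos.mpr ⟨a, ha⟩
      omega)
    have h1 : a ≤ (e 0 : ℝ) := (hS _ (e 0).2).1
    obtain ⟨i, hi⟩ := e.surjective ⟨a, ha⟩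
    have h2 : (e 0 : ℝ) ≤ (e i : ℝ) := by
      exact_mod_cast e.monotone (Fin.zero_le i)
    rw [hi] at h2
    exact le_antisymm h2 h1
  last := by
    set e := S.orderIsoOfFin (show S.card = S.card - 1 + 1 by
      have : 0 < S.card := Finset.card_pos.mpr ⟨a, ha⟩
      omega)
    have h1 : (e (Fin.last _) : ℝ) ≤ b := (hS _ (e (Fin.last _)).2).2
    obtain ⟨i, hi⟩ := e.surjective ⟨b, hb⟩
    have h2 : (e i : ℝ) ≤ (e (Fin.last _) : ℝ) := by
      exact_mod_cast e.monotone (Fin.le_last i)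
    rw [hi] at h2
    exact le_antisymm h1 h2

end IntervalPartition

namespace IntervalPartition
variable {a b : ℝ}

lemma ofFinset_points (a b : ℝ) (S : Finset ℝ) (ha : a ∈ S) (hb : b ∈ S)
    (hS : ∀ t ∈ S, t ∈ Set.Icc a b) : (ofFinset a b S ha hb hS).points = S := by
  apply Finset.eq_of_subset_of_card_le
  · intro t ht
    rw [mem_points_iff] at ht
    obtain ⟨i, rfl⟩ := ht
    have hcard : S.card = (ofFinset a b S ha hb hS).n + 1 := by
      have h1 : 0 < S.card := Finset.card_pos.mpr ⟨a, ha⟩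
      show S.card = S.card - 1 + 1
      omega
    show ((S.orderIsoOfFin hcard) i : ℝ) ∈ S
    exact Finset.coe_mem _
  · rw [card_points]
    show S.card ≤ S.card - 1 + 1
    have : 0 < S.card := Finset.card_pos.mpr ⟨a, ha⟩
    omega

lemma exists_idx {P R : IntervalPartition a b} (h : P.points ⊆ R.points) :
    ∃ idx : ℕ → ℕ, idx 0 = 0 ∧ idx P.n = R.n ∧
      (∀ i ≤ P.n, idx i ≤ R.n ∧ R.y (idx i) = P.y i) ∧
      ∀ i < P.n, idx i < idx (i + 1) := by
  have key : ∀ i, i ≤ P.n → ∃ j, j ≤ R.n ∧ R.y j = P.y i := by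
    intro i hi
    have h2 := h (P.y_mem_points hi)
    rw [mem_points_iff] at h2
    obtain ⟨jf, hjf⟩ := h2
    refine ⟨jf.val, Nat.lt_succ_iff.mp jf.isLt, ?_⟩
    rw [← R.x_eq_y]; exact hjf
  choose idx0 hidx1 hidx2 using key
  set idx : ℕ → ℕ := fun i => if h : i ≤ P.n then idx0 i h else R.n with hidx
  have hgood : ∀ i (hi : i ≤ P.n), idx i ≤ R.n ∧ R.y (idx i) = P.y i := by
    intro i hi
    simp only [hidx, dif_pos hi]
    exact ⟨hidx1 i hi, hidx2 i hi⟩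
  have h0 : idx 0 = 0 := by
    by_contra hne
    have h1 : 0 < idx 0 := Nat.pos_of_ne_zero hne
    have h2 := (hgood 0 (Nat.zero_le _)).2
    rw [P.y_zero] at h2
    have h3 : R.y 0 < R.y (idx 0) := R.y_strictMonoOn h1 (hgood 0 (Nat.zero_le _)).1
    rw [R.y_zero, h2] at h3
    exact lt_irrefl _ h3
  have hn : idx P.n = R.n := by
    rcases Nat.lt_or_ge (idx P.n) R.n with h1 | h1
    · exfalso
      have h2 := (hgood P.n le_rfl).2
      rw [P.y_last] at h2
      have h3 : R.y (idx P.n) < R.y R.n := R.y_strictMonoOn h1 le_rfl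
      rw [R.y_last, h2] at h3
      exact lt_irrefl _ h3
    · exact le_antisymm (hgood P.n le_rfl).1 h1
  refine ⟨idx, h0, hn, hgood, ?_⟩
  intro i hi
  by_contra hle
  have hle' : idx (i + 1) ≤ idx i := not_lt.mp hle
  have h2 : R.y (idx (i + 1)) ≤ R.y (idx i) := R.y_mono hle'
  rw [(hgood i (le_of_lt hi)).2, (hgood (i + 1) hi).2] at h2
  exact absurd h2 (not_le.mpr (P.y_strictMonoOn (Nat.lt_succ_self i) hi))

end IntervalPartition

section CurveLemmas
variable {M : ℕ} {a b : ℝ} (f : ℝ → EuclideanSpace ℝ (Fin M))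

lemma inscribedSum_nonneg (P : IntervalPartition a b) : 0 ≤ inscribedSum f P :=
  Finset.sum_nonneg fun _ _ => norm_nonneg _

lemma inscribedSum_le_toReal (htop : curveLength f a b ≠ ⊤) (P : IntervalPartition a b) :
    inscribedSum f P ≤ (curveLength f a b).toReal := by
  have h1 : ENNReal.ofReal (inscribedSum f P) ≤ curveLength f a b :=
    le_iSup (fun P => ENNReal.ofReal (inscribedSum f P)) P
  have h2 := ENNReal.toReal_mono htop h1
  rwa [ENNReal.toReal_ofReal (inscribedSum_nonneg f P)] at h2

/-- The trivial two-point partition. -/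
def twoPoint (hab : a < b) : IntervalPartition a b where
  n := 1
  x := fun i => if i = 0 then a else b
  mono := by
    intro i j hij
    fin_cases i <;> fin_cases j <;> simp_all <;> omega
  first := by simp
  last := by simp [Fin.last]

lemma inscribedSum_mono_refine {P R : IntervalPartition a b} (h : P.points ⊆ R.points) :
    inscribedSum f P ≤ inscribedSum f R := by
  obtain ⟨idx, h0, hn, hgood, hstep⟩ := IntervalPartition.exists_idx h
  rw [P.inscribedSum_eq, R.inscribedSum_eq]
  have hchain := sum_Ico_chain (fun j => ‖f (R.y (j + 1)) - f (R.y j)‖) idx P.n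
    (fun i hi => le_of_lt (hstep i hi))
  rw [h0, hn] at hchain
  simp only [Finset.range_eq_Ico] at hchain ⊢
  rw [← hchain]
  apply Finset.sum_le_sum
  intro i hi
  rw [Finset.mem_Ico] at hi
  have hi' : i < P.n := hi.2
  have htel : ∑ j ∈ Finset.Ico (idx i) (idx (i + 1)), (f (R.y (j + 1)) - f (R.y j))
      = f (P.y (i + 1)) - f (P.y i) := by
    rw [sum_Ico_telescope (fun j => f (R.y j)) (le_of_lt (hstep i hi'))]
    rw [(hgood i (le_of_lt hi')).2, (hgood (i + 1) hi').2]
  calc ‖f (P.y (i + 1)) - f (P.y i)‖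
      = ‖∑ j ∈ Finset.Ico (idx i) (idx (i + 1)), (f (R.y (j + 1)) - f (R.y j))‖ := by rw [htel]
    _ ≤ ∑ j ∈ Finset.Ico (idx i) (idx (i + 1)), ‖f (R.y (j + 1)) - f (R.y j)‖ :=
        norm_sum_le _ _
  
lemma exists_near_sup (hab : a < b) (htop : curveLength f a b ≠ ⊤) {ε : ℝ} (hε : 0 < ε) :
    ∃ P₀ : IntervalPartition a b, (curveLength f a b).toReal ≤ inscribedSum f P₀ + ε := by
  by_contra hcon
  push_neg at hcon
  have hP := hcon (twoPoint hab)
  have hP0 := inscribedSum_nonneg f (twoPoint hab)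
  have hV0 : (0:ℝ) ≤ (curveLength f a b).toReal := ENNReal.toReal_nonneg
  have hpos : 0 ≤ (curveLength f a b).toReal - ε := by linarith
  have h1 : curveLength f a b ≤ ENNReal.ofReal ((curveLength f a b).toReal - ε) := by
    show (⨆ P : IntervalPartition a b, ENNReal.ofReal (inscribedSum f P)) ≤ _
    exact iSup_le fun P => ENNReal.ofReal_le_ofReal (by linarith [hcon P])
  have h2 := ENNReal.toReal_mono (by simp) h1
  rw [ENNReal.toReal_ofReal hpos] at h2
  linarith
end CurveLemmas

section MeshLemma
variable {M : ℕ} {a b : ℝ} (f : ℝ → EuclideanSpace ℝ (Fin M))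

/-- Uniform continuity of `f` on `[a,b]` in ε-δ form. -/
lemma f_unif (hcont : ContinuousOn f (Set.Icc a b)) {η : ℝ} (hη : 0 < η) :
    ∃ δ > (0:ℝ), ∀ s ∈ Set.Icc a b, ∀ t ∈ Set.Icc a b, |s - t| < δ → ‖f s - f t‖ < η := by
  have h1 : UniformContinuousOn f (Set.Icc a b) :=
    IsCompact.uniformContinuousOn_of_continuous isCompact_Icc hcont
  rw [Metric.uniformContinuousOn_iff] at h1
  obtain ⟨δ, hδ, h2⟩ := h1 η hη
  refine ⟨δ, hδ, fun s hs t ht hst => ?_⟩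
  have := h2 s hs t ht (by rwa [Real.dist_eq])
  rwa [dist_eq_norm] at this

lemma inscribedSum_of_mesh (hab : a < b) (hcont : ContinuousOn f (Set.Icc a b))
    (htop : curveLength f a b ≠ ⊤) {α : ℝ} (hα : 0 < α) :
    ∃ δ > (0:ℝ), ∀ P : IntervalPartition a b, P.mesh < δ →
      (curveLength f a b).toReal ≤ inscribedSum f P + α := by
  obtain ⟨P₀, hP₀⟩ := exists_near_sup f hab htop (half_pos hα)
  set m : ℕ := P₀.n + 1 with hm
  have hmpos : (0:ℝ) < m := by positivity
  set η : ℝ := α / (4 * m) with hη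
  have hηpos : 0 < η := by positivity
  obtain ⟨δ, hδpos, hδ⟩ := f_unif f hcont hηpos
  refine ⟨δ, hδpos, fun P hmesh => ?_⟩
  -- common refinement
  set S : Finset ℝ := P.points ∪ P₀.points with hS
  have haS : a ∈ S := Finset.mem_union_left _ P.a_mem_points
  have hbS : b ∈ S := Finset.mem_union_left _ P.b_mem_points
  have hIcc : ∀ t ∈ S, t ∈ Set.Icc a b := by
    intro t ht
    rcases Finset.mem_union.mp ht with h | h
    · exact P.points_subset_Icc t h
    · exact P₀.points_subset_Icc t h
  set R : IntervalPartition a b := IntervalPartition.ofFinset a b S haS hbS hIcc with hR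
  have hRpts : R.points = S := IntervalPartition.ofFinset_points a b S haS hbS hIcc
  have hPR : P.points ⊆ R.points := by rw [hRpts]; exact Finset.subset_union_left
  have hP0R : P₀.points ⊆ R.points := by rw [hRpts]; exact Finset.subset_union_right
  have h1 : inscribedSum f P₀ ≤ inscribedSum f R := inscribedSum_mono_refine f hP0R
  -- card bound
  have hcard : (R.n : ℝ) ≤ (P.n : ℝ) + m := by
    have h2 : R.n + 1 = S.card := by rw [← hRpts, R.card_points]
    have h3 : S.card ≤ P.points.card + P₀.points.card := Finset.card_union_le _ _
    rw [P.card_points, P₀.card_points] at h3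
    have : R.n ≤ P.n + m := by omega
    exact_mod_cast this
  -- main claim: inscribedSum f R ≤ inscribedSum f P + 2 * η * m
  obtain ⟨idx, h0, hn, hgood, hstep⟩ := IntervalPartition.exists_idx hPR
  have hchain := sum_Ico_chain (fun j => ‖f (R.y (j + 1)) - f (R.y j)‖) idx P.n
    (fun i hi => le_of_lt (hstep i hi))
  rw [h0, hn] at hchain
  have hcount : ∑ i ∈ Finset.range P.n,
      ((Finset.Ico (idx i) (idx (i + 1))).card : ℝ) = (R.n : ℝ) := by
    have := sum_Ico_chain (fun _ => (1:ℝ)) idx P.n (fun i hi => le_of_lt (hstep i hi))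
    rw [h0, hn] at this
    simpa using this
  have hblock : ∀ i < P.n, ∑ j ∈ Finset.Ico (idx i) (idx (i + 1)), ‖f (R.y (j + 1)) - f (R.y j)‖
      ≤ ‖f (P.y (i + 1)) - f (P.y i)‖
        + 2 * η * (((Finset.Ico (idx i) (idx (i + 1))).card : ℝ) - 1) := by
    intro i hi
    have hk1 : idx i < idx (i + 1) := hstep i hi
    have hcard_pos : 1 ≤ (Finset.Ico (idx i) (idx (i + 1))).card := by
      rw [Nat.card_Ico]; omega
    rcases eq_or_lt_of_le hcard_pos with heq | hlt
    · -- single interval: equality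
      have hk : idx (i + 1) = idx i + 1 := by
        have := heq.symm
        rw [Nat.card_Ico] at this
        omega
      have : Finset.Ico (idx i) (idx (i + 1)) = {idx i} := by
        rw [hk, Finset.Ico_add_one_right_eq_Icc, Finset.Icc_self]
      have e1 : R.y (idx i + 1) = P.y (i + 1) := by
        rw [← hk]; exact (hgood (i + 1) hi).2
      have e2 : R.y (idx i) = P.y i := (hgood i (le_of_lt hi)).2
      rw [this, Finset.sum_singleton, e1, e2]
      simp
    · -- at least 2 subintervals: each term ≤ η
      have hterm : ∀ j ∈ Finset.Ico (idx i) (idx (i + 1)), ‖f (R.y (j + 1)) - f (R.y j)‖ ≤ η := by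
        intro j hj
        rw [Finset.mem_Ico] at hj
        have hy1 : P.y i ≤ R.y j := by
          have := R.y_mono hj.1
          rwa [(hgood i (le_of_lt hi)).2] at this
        have hy2 : R.y (j + 1) ≤ P.y (i + 1) := by
          have := R.y_mono (Nat.succ_le_of_lt hj.2)
          rwa [(hgood (i + 1) hi).2] at this
        have hmono : R.y j ≤ R.y (j + 1) := R.y_mono (Nat.le_succ j)
        have hgap : P.y (i + 1) - P.y i ≤ P.mesh := P.gap_le_mesh hi
        apply le_of_lt
        apply hδ _ (R.y_mem_Icc (j+1)) _ (R.y_mem_Icc j)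
        rw [abs_of_nonneg (by linarith)]
        linarith
      calc ∑ j ∈ Finset.Ico (idx i) (idx (i + 1)), ‖f (R.y (j + 1)) - f (R.y j)‖
          ≤ ∑ _j ∈ Finset.Ico (idx i) (idx (i + 1)), η := Finset.sum_le_sum hterm
        _ = ((Finset.Ico (idx i) (idx (i + 1))).card : ℝ) * η := by
            rw [Finset.sum_const, nsmul_eq_mul]
        _ ≤ ‖f (P.y (i + 1)) - f (P.y i)‖
            + 2 * η * (((Finset.Ico (idx i) (idx (i + 1))).card : ℝ) - 1) := by
            have hc2 : (2:ℝ) ≤ ((Finset.Ico (idx i) (idx (i + 1))).card : ℝ) := by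
              exact_mod_cast hlt
            have hn0 : (0:ℝ) ≤ ‖f (P.y (i + 1)) - f (P.y i)‖ := norm_nonneg _
            nlinarith
  have h2 : inscribedSum f R ≤ inscribedSum f P + 2 * η * ((R.n : ℝ) - (P.n : ℝ)) := by
    rw [← Finset.range_eq_Ico] at hchain
    rw [R.inscribedSum_eq f, P.inscribedSum_eq f, ← hchain]
    have := Finset.sum_le_sum (fun i hi => hblock i (Finset.mem_range.mp hi))
    calc ∑ i ∈ Finset.range P.n, ∑ j ∈ Finset.Ico (idx i) (idx (i + 1)), ‖f (R.y (j + 1)) - f (R.y j)‖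
        ≤ ∑ i ∈ Finset.range P.n, (‖f (P.y (i + 1)) - f (P.y i)‖
            + 2 * η * (((Finset.Ico (idx i) (idx (i + 1))).card : ℝ) - 1)) := this
      _ = (∑ i ∈ Finset.range P.n, ‖f (P.y (i + 1)) - f (P.y i)‖)
            + 2 * η * ((∑ i ∈ Finset.range P.n, ((Finset.Ico (idx i) (idx (i + 1))).card : ℝ)) - P.n) := by
          rw [Finset.sum_add_distrib, ← Finset.mul_sum, Finset.sum_sub_distrib]
          simp [Finset.sum_const, Finset.card_range]
      _ = (∑ i ∈ Finset.range P.n, ‖f (P.y (i + 1)) - f (P.y i)‖)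
            + 2 * η * ((R.n : ℝ) - (P.n : ℝ)) := by rw [hcount]
  have hfin : 2 * η * ((R.n : ℝ) - (P.n : ℝ)) ≤ α / 2 := by
    have h3 : (R.n : ℝ) - (P.n : ℝ) ≤ m := by linarith
    have h4 : 2 * η * (m:ℝ) = α / 2 := by
      rw [hη]
      field_simp
      norm_num
    nlinarith
  linarith
end MeshLemma

section FAnalysis
variable {M : ℕ}

set_option maxHeartbeats 1000000 in
lemma key_vec {G : EuclideanSpace ℝ (Fin M) → ℝ} {C θ ε1 : ℝ}
    (hC : 0 < C) (hθ : 0 < θ) (hθ1 : θ ≤ 1) (hε1 : 0 ≤ ε1)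
    (hom : ∀ K : ℝ, 0 ≤ K → ∀ t, G (K • t) = K * G t)
    (hbound : ∀ t, |G t| ≤ C * ‖t‖)
    (hUC : ∀ s s' : EuclideanSpace ℝ (Fin M), ‖s‖ ≤ 1 → ‖s'‖ ≤ 1 →
      ‖s - s'‖ ≤ Real.sqrt (2 * θ) → |G s - G s'| ≤ ε1)
    (v t : EuclideanSpace ℝ (Fin M)) (hv : ‖v‖ = 1) :
    |G t - (inner ℝ t v : ℝ) * G v| ≤ ε1 * ‖t‖ + 2 * C / θ * (‖t‖ - (inner ℝ t v : ℝ)) := by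
  set p : ℝ := (inner ℝ t v : ℝ) with hp
  set K : ℝ := ‖t‖ with hK
  have hKnn : 0 ≤ K := norm_nonneg t
  have hpK : p ≤ K := by
    have := real_inner_le_norm t v
    rwa [hv, mul_one] at this
  have hGv : |G v| ≤ C := by
    have := hbound v
    rwa [hv, mul_one] at this
  have hD : 2 * C ≤ 2 * C / θ := by
    rw [le_div_iff₀ hθ]; nlinarith
  have hDpos : 0 < 2 * C / θ := by positivity
  rcases le_or_gt p 0 with hple | hppos
  · -- p ≤ 0 case
    have h1 : |G t - p * G v| ≤ |G t| + |p| * |G v| := by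
      calc |G t - p * G v| ≤ |G t| + |p * G v| := abs_sub _ _
        _ = |G t| + |p| * |G v| := by rw [abs_mul]
    have h2 : |G t| ≤ C * K := hbound t
    have h3 : |p| = -p := abs_of_nonpos hple
    have he : K ≤ K - p := by linarith
    have h4 : |p| * |G v| ≤ (-p) * C := by
      rw [h3]
      exact mul_le_mul_of_nonneg_left hGv (by linarith)
    have h5 : |G t - p * G v| ≤ 2 * C * (K - p) := by nlinarith
    have h6 : 2 * C * (K - p) ≤ 2 * C / θ * (K - p) :=
      mul_le_mul_of_nonneg_right hD (by linarith)
    nlinarith [mul_nonneg hε1 hKnn]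
  · -- 0 < p
    have hKpos : 0 < K := lt_of_lt_of_le hppos hpK
    have hGpv : G (p • v) = p * G v := hom p (le_of_lt hppos) v
    rcases lt_or_ge (θ * K) (K - p) with hbig | hsmall
    · -- e > θK : crude bound
      have h1 : |G t - p * G v| ≤ C * K + p * C := by
        rw [← hGpv]
        calc |G t - G (p • v)| ≤ |G t| + |G (p • v)| := abs_sub _ _
          _ ≤ C * K + C * ‖p • v‖ := add_le_add (hbound t) (hbound _)
          _ = C * K + p * C := by
              rw [norm_smul, hv, mul_one, Real.norm_eq_abs, abs_of_pos hppos]; ring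
      have h2 : C * K + p * C ≤ 2 * C * K := by nlinarith
      have h3 : 2 * C * K ≤ 2 * C / θ * (K - p) := by
        rw [div_mul_eq_mul_div, le_div_iff₀ hθ]
        nlinarith
      nlinarith [mul_nonneg hε1 hKnn]
    · -- e ≤ θK : uniform continuity bound
      set s : EuclideanSpace ℝ (Fin M) := K⁻¹ • t with hs
      set s' : EuclideanSpace ℝ (Fin M) := (K⁻¹ * p) • v with hs'
      have hKinv : (0:ℝ) < K⁻¹ := inv_pos.mpr hKpos
      have hns : ‖s‖ ≤ 1 := by
        rw [hs, norm_smul, Real.norm_eq_abs, abs_of_pos hKinv, ← hK]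
        rw [inv_mul_cancel₀ (ne_of_gt hKpos)]
      have hns' : ‖s'‖ ≤ 1 := by
        rw [hs', norm_smul, Real.norm_eq_abs, hv, mul_one,
          abs_of_pos (by positivity : (0:ℝ) < K⁻¹ * p)]
        rw [inv_mul_le_iff₀ hKpos, mul_one]
        exact hpK
      have hsub : s - s' = K⁻¹ • (t - p • v) := by
        rw [hs, hs', smul_sub, mul_smul]
      have hnormsq : ‖t - p • v‖ ^ 2 = K ^ 2 - p ^ 2 := by
        rw [norm_sub_sq_real, real_inner_smul_right, ← hp, norm_smul, Real.norm_eq_abs,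
          abs_of_pos hppos, hv, mul_one, ← hK]
        ring
      have hdist : ‖s - s'‖ ≤ Real.sqrt (2 * θ) := by
        rw [hsub, norm_smul, Real.norm_eq_abs, abs_of_pos hKinv]
        rw [show Real.sqrt (2 * θ) = Real.sqrt (2 * θ) from rfl]
        apply (Real.le_sqrt (by positivity) (by positivity)).mpr
        have h1 : (K⁻¹ * ‖t - p • v‖) ^ 2 = K⁻¹ ^ 2 * (K ^ 2 - p ^ 2) := by
          rw [mul_pow, hnormsq]
        rw [h1]
        have h2 : K ^ 2 - p ^ 2 ≤ 2 * K * (K - p) := by nlinarith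
        have h3 : K⁻¹ ^ 2 * (K ^ 2 - p ^ 2) ≤ K⁻¹ ^ 2 * (2 * K * (K - p)) :=
          mul_le_mul_of_nonneg_left h2 (by positivity)
        have h4 : K⁻¹ ^ 2 * (2 * K * (K - p)) = 2 * (K - p) / K := by
          field_simp
        have h5 : 2 * (K - p) / K ≤ 2 * θ := by
          rw [div_le_iff₀ hKpos]
          nlinarith
        linarith
      have hUC1 := hUC s s' hns hns' hdist
      have hGs : G s = K⁻¹ * G t := hom K⁻¹ (le_of_lt hKinv) t
      have hGs' : G s' = K⁻¹ * (p * G v) := by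
        rw [hs', mul_smul]
        rw [hom K⁻¹ (le_of_lt hKinv), hom p (le_of_lt hppos)]
      have h6 : |G s - G s'| = K⁻¹ * |G t - p * G v| := by
        rw [hGs, hGs', ← mul_sub, abs_mul, abs_of_pos hKinv]
      rw [h6] at hUC1
      have h7 : |G t - p * G v| ≤ ε1 * K := by
        calc |G t - p * G v| = K * (K⁻¹ * |G t - p * G v|) := by
              field_simp
          _ ≤ K * ε1 := mul_le_mul_of_nonneg_left hUC1 hKnn
          _ = ε1 * K := mul_comm _ _
      have h8 : 0 ≤ 2 * C / θ * (K - p) := mul_nonneg (le_of_lt hDpos) (by linarith)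
      linarith

lemma key_block {G : EuclideanSpace ℝ (Fin M) → ℝ} {C θ ε1 : ℝ}
    (hC : 0 < C) (hθ : 0 < θ) (hθ1 : θ ≤ 1) (hε1 : 0 ≤ ε1)
    (hom : ∀ K : ℝ, 0 ≤ K → ∀ t, G (K • t) = K * G t)
    (hbound : ∀ t, |G t| ≤ C * ‖t‖)
    (hUC : ∀ s s' : EuclideanSpace ℝ (Fin M), ‖s‖ ≤ 1 → ‖s'‖ ≤ 1 →
      ‖s - s'‖ ≤ Real.sqrt (2 * θ) → |G s - G s'| ≤ ε1)
    (sf : Finset ℕ) (t : ℕ → EuclideanSpace ℝ (Fin M)) :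
    |(∑ j ∈ sf, G (t j)) - G (∑ j ∈ sf, t j)|
      ≤ ε1 * (∑ j ∈ sf, ‖t j‖) + 2 * C / θ * ((∑ j ∈ sf, ‖t j‖) - ‖∑ j ∈ sf, t j‖) := by
  set u : EuclideanSpace ℝ (Fin M) := ∑ j ∈ sf, t j with hu
  have hD : 2 * C ≤ 2 * C / θ := by rw [le_div_iff₀ hθ]; nlinarith
  have hsum_nn : 0 ≤ ∑ j ∈ sf, ‖t j‖ := Finset.sum_nonneg fun _ _ => norm_nonneg _
  by_cases hu0 : u = 0
  · have hG0 : G 0 = 0 := by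
      have := hom 0 le_rfl 0
      rwa [zero_smul, zero_mul] at this
    rw [hu0, hG0, norm_zero, sub_zero, sub_zero]
    calc |∑ j ∈ sf, G (t j)| ≤ ∑ j ∈ sf, |G (t j)| := Finset.abs_sum_le_sum_abs _ _
      _ ≤ ∑ j ∈ sf, C * ‖t j‖ := Finset.sum_le_sum fun j _ => hbound (t j)
      _ = C * ∑ j ∈ sf, ‖t j‖ := by rw [Finset.mul_sum]
      _ ≤ ε1 * (∑ j ∈ sf, ‖t j‖) + 2 * C / θ * (∑ j ∈ sf, ‖t j‖) := by
          have h1 : C * ∑ j ∈ sf, ‖t j‖ ≤ 2 * C / θ * ∑ j ∈ sf, ‖t j‖ :=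
            mul_le_mul_of_nonneg_right (by linarith) hsum_nn
          nlinarith [mul_nonneg hε1 hsum_nn]
  · set v : EuclideanSpace ℝ (Fin M) := ‖u‖⁻¹ • u with hv
    have hnv : ‖v‖ = 1 := norm_smul_inv_norm (𝕜 := ℝ) hu0
    have hupos : (0:ℝ) < ‖u‖ := norm_pos_iff.mpr hu0
    have hGu : G u = ‖u‖ * G v := by
      have h1 : (‖u‖ : ℝ) • v = u := by
        rw [hv, smul_smul, mul_inv_cancel₀ (ne_of_gt hupos), one_smul]
      conv_lhs => rw [← h1]
      rw [hom ‖u‖ (le_of_lt hupos)]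
    have hps : ∑ j ∈ sf, (inner ℝ (t j) v : ℝ) = ‖u‖ := by
      rw [← sum_inner]
      rw [← hu, hv, real_inner_smul_right, real_inner_self_eq_norm_sq]
      field_simp
    have hkey : ∀ j ∈ sf, |G (t j) - (inner ℝ (t j) v : ℝ) * G v|
        ≤ ε1 * ‖t j‖ + 2 * C / θ * (‖t j‖ - (inner ℝ (t j) v : ℝ)) :=
      fun j _ => key_vec hC hθ hθ1 hε1 hom hbound hUC v (t j) hnv
    have hsplit : (∑ j ∈ sf, G (t j)) - G u
        = ∑ j ∈ sf, (G (t j) - (inner ℝ (t j) v : ℝ) * G v) := by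
      rw [Finset.sum_sub_distrib, ← Finset.sum_mul, hps, hGu]
    rw [hsplit]
    calc |∑ j ∈ sf, (G (t j) - (inner ℝ (t j) v : ℝ) * G v)|
        ≤ ∑ j ∈ sf, |G (t j) - (inner ℝ (t j) v : ℝ) * G v| := Finset.abs_sum_le_sum_abs _ _
      _ ≤ ∑ j ∈ sf, (ε1 * ‖t j‖ + 2 * C / θ * (‖t j‖ - (inner ℝ (t j) v : ℝ))) :=
          Finset.sum_le_sum hkey
      _ = ε1 * (∑ j ∈ sf, ‖t j‖) + 2 * C / θ * ((∑ j ∈ sf, ‖t j‖) - ‖u‖) := by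
          rw [Finset.sum_add_distrib, ← Finset.mul_sum, ← Finset.mul_sum, Finset.sum_sub_distrib,
            hps]
end FAnalysis


section Main
variable {M : ℕ}

/-- ℕ-indexed Riemann-type sum. -/
def rsum {a b : ℝ} (F : EuclideanSpace ℝ (Fin M) → EuclideanSpace ℝ (Fin M) → ℝ)
    (f : ℝ → EuclideanSpace ℝ (Fin M)) (P : IntervalPartition a b) (ξ : ℕ → ℝ) : ℝ :=
  ∑ k ∈ Finset.range P.n, F (f (ξ k)) (f (P.y (k + 1)) - f (P.y k))

set_option maxHeartbeats 2000000 in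
lemma refine_est {a b : ℝ} (hab : a < b) (f : ℝ → EuclideanSpace ℝ (Fin M))
    (hcont : ContinuousOn f (Set.Icc a b)) (htop : curveLength f a b ≠ ⊤)
    (F : EuclideanSpace ℝ (Fin M) → EuclideanSpace ℝ (Fin M) → ℝ)
    (hF : IsParametricIntegrand F) {ε : ℝ} (hε : 0 < ε) :
    ∃ δ > (0:ℝ), ∀ P : IntervalPartition a b, P.mesh < δ →
      ∀ ξ : ℕ → ℝ, (∀ k < P.n, ξ k ∈ Set.Icc (P.y k) (P.y (k + 1))) →
      ∀ R : IntervalPartition a b, P.points ⊆ R.points →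
      ∀ ζ : ℕ → ℝ, (∀ k < R.n, ζ k ∈ Set.Icc (R.y k) (R.y (k + 1))) →
      |rsum F f P ξ - rsum F f R ζ| ≤ ε := by
  obtain ⟨hFc, hom⟩ := hF
  have hom0 : ∀ x, F x 0 = 0 := by
    intro x
    have := hom 0 le_rfl x 0
    rwa [zero_smul, zero_mul] at this
  set V : ℝ := (curveLength f a b).toReal with hV
  have hV0 : 0 ≤ V := ENNReal.toReal_nonneg
  set KS : Set (EuclideanSpace ℝ (Fin M)) := f '' Set.Icc a b with hKS
  have hKcomp : IsCompact KS := (isCompact_Icc).image_of_continuousOn hcont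
  set Z : Set (EuclideanSpace ℝ (Fin M) × EuclideanSpace ℝ (Fin M)) :=
    KS ×ˢ Metric.closedBall (0 : EuclideanSpace ℝ (Fin M)) 1 with hZ
  have hZcomp : IsCompact Z := hKcomp.prod (isCompact_closedBall _ _)
  -- bound C
  obtain ⟨C₀, hC₀⟩ := hZcomp.exists_bound_of_continuousOn hFc.continuousOn
  set C : ℝ := max C₀ 1 with hC
  have hCpos : (0:ℝ) < C := lt_of_lt_of_le one_pos (le_max_right _ _)
  have hCb : ∀ x ∈ KS, ∀ t : EuclideanSpace ℝ (Fin M), ‖t‖ ≤ 1 → |F x t| ≤ C := by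
    intro x hx t ht
    have h1 := hC₀ (x, t) (Set.mk_mem_prod hx (by simpa [Metric.mem_closedBall, dist_zero_right] using ht))
    calc |F x t| = ‖F x t‖ := (Real.norm_eq_abs _).symm
      _ ≤ C₀ := h1
      _ ≤ C := le_max_left _ _
  have hbound : ∀ x ∈ KS, ∀ t : EuclideanSpace ℝ (Fin M), |F x t| ≤ C * ‖t‖ := by
    intro x hx t
    by_cases ht : t = 0
    · simp [ht, hom0]
    · have hnt : (0:ℝ) < ‖t‖ := norm_pos_iff.mpr ht
      have h1 : t = ‖t‖ • (‖t‖⁻¹ • t) := by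
        rw [smul_smul, mul_inv_cancel₀ (ne_of_gt hnt), one_smul]
      have h2 : ‖(‖t‖⁻¹ • t)‖ = 1 := norm_smul_inv_norm (𝕜 := ℝ) ht
      calc |F x t| = |F x (‖t‖ • (‖t‖⁻¹ • t))| := by rw [← h1]
        _ = ‖t‖ * |F x (‖t‖⁻¹ • t)| := by
            rw [hom ‖t‖ (le_of_lt hnt), abs_mul, abs_of_pos hnt]
        _ ≤ ‖t‖ * C := mul_le_mul_of_nonneg_left (hCb x hx _ (le_of_eq h2)) (le_of_lt hnt)
        _ = C * ‖t‖ := mul_comm _ _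
  -- uniform continuity of F on Z
  have hUCF : UniformContinuousOn (fun p : EuclideanSpace ℝ (Fin M) × EuclideanSpace ℝ (Fin M) => F p.1 p.2) Z :=
    hZcomp.uniformContinuousOn_of_continuous hFc.continuousOn
  rw [Metric.uniformContinuousOn_iff] at hUCF
  set ε1 : ℝ := ε / (4 * (V + 1)) with hε1def
  have hε1 : 0 < ε1 := by positivity
  obtain ⟨r, hr, hUCr⟩ := hUCF ε1 hε1
  set θ : ℝ := min 1 (r ^ 2 / 4) with hθdef
  have hθ : 0 < θ := lt_min one_pos (by positivity)
  have hθ1 : θ ≤ 1 := min_le_left _ _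
  have hsqrt : Real.sqrt (2 * θ) < r := by
    have h1 : 2 * θ ≤ r ^ 2 / 2 := by
      have := min_le_right (1:ℝ) (r ^ 2 / 4)
      nlinarith
    have h2 : Real.sqrt (2 * θ) ≤ Real.sqrt (r ^ 2 / 2) := Real.sqrt_le_sqrt h1
    have h3 : Real.sqrt (r ^ 2 / 2) < Real.sqrt (r ^ 2) := by
      apply Real.sqrt_lt_sqrt (by positivity)
      nlinarith
    rw [Real.sqrt_sq (le_of_lt hr)] at h3
    linarith
  -- first-argument modulus
  have hmod1 : ∀ x ∈ KS, ∀ x' ∈ KS, ‖x - x'‖ < r →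
      ∀ w : EuclideanSpace ℝ (Fin M), |F x w - F x' w| ≤ ε1 * ‖w‖ := by
    intro x hx x' hx' hxx w
    by_cases hw : w = 0
    · simp [hw, hom0]
    · have hnw : (0:ℝ) < ‖w‖ := norm_pos_iff.mpr hw
      set wh : EuclideanSpace ℝ (Fin M) := ‖w‖⁻¹ • w with hwh
      have h2 : ‖wh‖ = 1 := norm_smul_inv_norm (𝕜 := ℝ) hw
      have hmem : ∀ z ∈ KS, (z, wh) ∈ Z := fun z hz =>
        Set.mk_mem_prod hz (by simp [Metric.mem_closedBall, dist_zero_right, h2])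
      have h3 := hUCr (x, wh) (hmem x hx) (x', wh) (hmem x' hx')
        (by rw [Prod.dist_eq]; simp [dist_eq_norm, hxx])
      rw [Real.dist_eq] at h3
      have h4 : w = ‖w‖ • wh := by
        rw [hwh, smul_smul, mul_inv_cancel₀ (ne_of_gt hnw), one_smul]
      calc |F x w - F x' w| = |F x (‖w‖ • wh) - F x' (‖w‖ • wh)| := by rw [← h4]
        _ = ‖w‖ * |F x wh - F x' wh| := by
            rw [hom ‖w‖ (le_of_lt hnw), hom ‖w‖ (le_of_lt hnw), ← mul_sub, abs_mul,
              abs_of_pos hnw]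
        _ ≤ ‖w‖ * ε1 := mul_le_mul_of_nonneg_left (le_of_lt h3) (le_of_lt hnw)
        _ = ε1 * ‖w‖ := mul_comm _ _
  -- second-argument modulus
  have hmod2 : ∀ x ∈ KS, ∀ s s' : EuclideanSpace ℝ (Fin M), ‖s‖ ≤ 1 → ‖s'‖ ≤ 1 →
      ‖s - s'‖ ≤ Real.sqrt (2 * θ) → |F x s - F x s'| ≤ ε1 := by
    intro x hx s s' hs hs' hss
    have hmem : ∀ z : EuclideanSpace ℝ (Fin M), ‖z‖ ≤ 1 → (x, z) ∈ Z := fun z hz =>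
      Set.mk_mem_prod hx (by simp [Metric.mem_closedBall, dist_zero_right, hz])
    have h3 := hUCr (x, s) (hmem s hs) (x, s') (hmem s' hs')
      (by rw [Prod.dist_eq]; simp [dist_eq_norm]; linarith)
    rw [Real.dist_eq] at h3
    exact le_of_lt h3
  -- δ choices
  set α : ℝ := ε * θ / (8 * C) with hαdef
  have hα : 0 < α := by positivity
  obtain ⟨δ1, hδ1, hδ1p⟩ := inscribedSum_of_mesh f hab hcont htop hα
  obtain ⟨δ2, hδ2, hδ2p⟩ := f_unif f hcont hr
  refine ⟨min δ1 δ2, lt_min hδ1 hδ2, ?_⟩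
  intro P hmesh ξ hξ R hPR ζ hζ
  have hmesh1 : P.mesh < δ1 := lt_of_lt_of_le hmesh (min_le_left _ _)
  have hmesh2 : P.mesh < δ2 := lt_of_lt_of_le hmesh (min_le_right _ _)
  set D : ℝ := 2 * C / θ with hDdef
  have hDpos : 0 < D := by positivity
  obtain ⟨idx, h0, hn, hgood, hstep⟩ := IntervalPartition.exists_idx hPR
  -- tags in [a,b] and useful inclusions
  have hξab : ∀ i < P.n, ξ i ∈ Set.Icc a b := by
    intro i hi
    obtain ⟨h1, h2⟩ := hξ i hi
    exact ⟨le_trans (P.a_le_y i) h1, le_trans h2 (P.y_le_b (i + 1))⟩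
  have hζab : ∀ j < R.n, ζ j ∈ Set.Icc a b := by
    intro j hj
    obtain ⟨h1, h2⟩ := hζ j hj
    exact ⟨le_trans (R.a_le_y j) h1, le_trans h2 (R.y_le_b (j + 1))⟩
  -- block estimates
  have hblocki : ∀ i < P.n,
      |(∑ j ∈ Finset.Ico (idx i) (idx (i + 1)), F (f (ζ j)) (f (R.y (j + 1)) - f (R.y j)))
          - F (f (ξ i)) (f (P.y (i + 1)) - f (P.y i))|
        ≤ 2 * ε1 * (∑ j ∈ Finset.Ico (idx i) (idx (i + 1)), ‖f (R.y (j + 1)) - f (R.y j)‖)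
          + D * ((∑ j ∈ Finset.Ico (idx i) (idx (i + 1)), ‖f (R.y (j + 1)) - f (R.y j)‖)
              - ‖f (P.y (i + 1)) - f (P.y i)‖) := by
    intro i hi
    have hξK : f (ξ i) ∈ KS := Set.mem_image_of_mem f (hξab i hi)
    -- telescoping
    have htel : ∑ j ∈ Finset.Ico (idx i) (idx (i + 1)), (f (R.y (j + 1)) - f (R.y j))
        = f (P.y (i + 1)) - f (P.y i) := by
      rw [sum_Ico_telescope (fun j => f (R.y j)) (le_of_lt (hstep i hi))]
      rw [(hgood i (le_of_lt hi)).2, (hgood (i + 1) hi).2]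
    -- Step A: change of tags
    have hA : ∀ j ∈ Finset.Ico (idx i) (idx (i + 1)),
        |F (f (ζ j)) (f (R.y (j + 1)) - f (R.y j)) - F (f (ξ i)) (f (R.y (j + 1)) - f (R.y j))|
          ≤ ε1 * ‖f (R.y (j + 1)) - f (R.y j)‖ := by
      intro j hj
      rw [Finset.mem_Ico] at hj
      have hjR : j < R.n := lt_of_lt_of_le hj.2 (hgood (i + 1) hi).1
      have hζK : f (ζ j) ∈ KS := Set.mem_image_of_mem f (hζab j hjR)
      -- ζ j and ξ i both in [P.y i, P.y (i+1)]
      have hy1 : P.y i ≤ R.y j := by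
        have := R.y_mono hj.1
        rwa [(hgood i (le_of_lt hi)).2] at this
      have hy2 : R.y (j + 1) ≤ P.y (i + 1) := by
        have := R.y_mono (Nat.succ_le_of_lt hj.2)
        rwa [(hgood (i + 1) hi).2] at this
      obtain ⟨hz1, hz2⟩ := hζ j hjR
      obtain ⟨hx1, hx2⟩ := hξ i hi
      have hgap : P.y (i + 1) - P.y i ≤ P.mesh := P.gap_le_mesh hi
      have hdist : |ζ j - ξ i| < δ2 := by
        rw [abs_lt]
        constructor <;> nlinarith [R.y_mono (Nat.le_succ j)]
      have hfdist : ‖f (ζ j) - f (ξ i)‖ < r :=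
        hδ2p _ (hζab j hjR) _ (hξab i hi) hdist
      exact hmod1 _ hζK _ hξK hfdist _
    -- Step B: key_block at x = f (ξ i)
    have hB := key_block (G := fun t => F (f (ξ i)) t) hCpos hθ hθ1 (le_of_lt hε1)
      (fun K hK t => hom K hK (f (ξ i)) t) (fun t => hbound _ hξK t)
      (fun s s' hs hs' hss => hmod2 _ hξK s s' hs hs' hss)
      (Finset.Ico (idx i) (idx (i + 1))) (fun j => f (R.y (j + 1)) - f (R.y j))
    rw [htel] at hB
    -- combine
    have hAsum : |(∑ j ∈ Finset.Ico (idx i) (idx (i + 1)), F (f (ζ j)) (f (R.y (j + 1)) - f (R.y j)))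
        - (∑ j ∈ Finset.Ico (idx i) (idx (i + 1)), F (f (ξ i)) (f (R.y (j + 1)) - f (R.y j)))|
        ≤ ε1 * (∑ j ∈ Finset.Ico (idx i) (idx (i + 1)), ‖f (R.y (j + 1)) - f (R.y j)‖) := by
      rw [← Finset.sum_sub_distrib]
      calc |∑ j ∈ Finset.Ico (idx i) (idx (i + 1)),
              (F (f (ζ j)) (f (R.y (j + 1)) - f (R.y j)) - F (f (ξ i)) (f (R.y (j + 1)) - f (R.y j)))|
          ≤ ∑ j ∈ Finset.Ico (idx i) (idx (i + 1)),
              |F (f (ζ j)) (f (R.y (j + 1)) - f (R.y j)) - F (f (ξ i)) (f (R.y (j + 1)) - f (R.y j))| :=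
            Finset.abs_sum_le_sum_abs _ _
        _ ≤ ∑ j ∈ Finset.Ico (idx i) (idx (i + 1)), ε1 * ‖f (R.y (j + 1)) - f (R.y j)‖ :=
            Finset.sum_le_sum hA
        _ = ε1 * (∑ j ∈ Finset.Ico (idx i) (idx (i + 1)), ‖f (R.y (j + 1)) - f (R.y j)‖) := by
            rw [Finset.mul_sum]
    calc |(∑ j ∈ Finset.Ico (idx i) (idx (i + 1)), F (f (ζ j)) (f (R.y (j + 1)) - f (R.y j)))
          - F (f (ξ i)) (f (P.y (i + 1)) - f (P.y i))|
        ≤ |(∑ j ∈ Finset.Ico (idx i) (idx (i + 1)), F (f (ζ j)) (f (R.y (j + 1)) - f (R.y j)))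
            - (∑ j ∈ Finset.Ico (idx i) (idx (i + 1)), F (f (ξ i)) (f (R.y (j + 1)) - f (R.y j)))|
          + |(∑ j ∈ Finset.Ico (idx i) (idx (i + 1)), F (f (ξ i)) (f (R.y (j + 1)) - f (R.y j)))
            - F (f (ξ i)) (f (P.y (i + 1)) - f (P.y i))| := by
          apply abs_sub_le
      _ ≤ 2 * ε1 * (∑ j ∈ Finset.Ico (idx i) (idx (i + 1)), ‖f (R.y (j + 1)) - f (R.y j)‖)
          + D * ((∑ j ∈ Finset.Ico (idx i) (idx (i + 1)), ‖f (R.y (j + 1)) - f (R.y j)‖)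
              - ‖f (P.y (i + 1)) - f (P.y i)‖) := by
          have hsum_nn : 0 ≤ ∑ j ∈ Finset.Ico (idx i) (idx (i + 1)), ‖f (R.y (j + 1)) - f (R.y j)‖ :=
            Finset.sum_nonneg fun _ _ => norm_nonneg _
          linarith [hAsum, hB]
  -- sum everything
  have hchain := sum_Ico_chain (fun j => F (f (ζ j)) (f (R.y (j + 1)) - f (R.y j))) idx P.n
    (fun i hi => le_of_lt (hstep i hi))
  rw [h0, hn, ← Finset.range_eq_Ico] at hchain
  have hchainN := sum_Ico_chain (fun j => ‖f (R.y (j + 1)) - f (R.y j)‖) idx P.n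
    (fun i hi => le_of_lt (hstep i hi))
  rw [h0, hn, ← Finset.range_eq_Ico] at hchainN
  have hsplit : rsum F f R ζ - rsum F f P ξ
      = ∑ i ∈ Finset.range P.n,
          ((∑ j ∈ Finset.Ico (idx i) (idx (i + 1)), F (f (ζ j)) (f (R.y (j + 1)) - f (R.y j)))
            - F (f (ξ i)) (f (P.y (i + 1)) - f (P.y i))) := by
    rw [Finset.sum_sub_distrib, hchain]
    rfl
  have habs : |rsum F f R ζ - rsum F f P ξ|
      ≤ 2 * ε1 * inscribedSum f R + D * (inscribedSum f R - inscribedSum f P) := by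
    rw [hsplit]
    calc |∑ i ∈ Finset.range P.n,
            ((∑ j ∈ Finset.Ico (idx i) (idx (i + 1)), F (f (ζ j)) (f (R.y (j + 1)) - f (R.y j)))
              - F (f (ξ i)) (f (P.y (i + 1)) - f (P.y i)))|
        ≤ ∑ i ∈ Finset.range P.n,
            |(∑ j ∈ Finset.Ico (idx i) (idx (i + 1)), F (f (ζ j)) (f (R.y (j + 1)) - f (R.y j)))
              - F (f (ξ i)) (f (P.y (i + 1)) - f (P.y i))| := Finset.abs_sum_le_sum_abs _ _
      _ ≤ ∑ i ∈ Finset.range P.n,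
            (2 * ε1 * (∑ j ∈ Finset.Ico (idx i) (idx (i + 1)), ‖f (R.y (j + 1)) - f (R.y j)‖)
              + D * ((∑ j ∈ Finset.Ico (idx i) (idx (i + 1)), ‖f (R.y (j + 1)) - f (R.y j)‖)
                  - ‖f (P.y (i + 1)) - f (P.y i)‖)) :=
          Finset.sum_le_sum fun i hi => hblocki i (Finset.mem_range.mp hi)
      _ = 2 * ε1 * inscribedSum f R + D * (inscribedSum f R - inscribedSum f P) := by
          rw [Finset.sum_add_distrib, ← Finset.mul_sum, ← Finset.mul_sum, Finset.sum_sub_distrib,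
            hchainN, R.inscribedSum_eq f, P.inscribedSum_eq f]
  -- final numeric bound
  have hRV : inscribedSum f R ≤ V := inscribedSum_le_toReal f htop R
  have hPV : V ≤ inscribedSum f P + α := hδ1p P hmesh1
  have hRnn : 0 ≤ inscribedSum f R := inscribedSum_nonneg f R
  have h1 : 2 * ε1 * inscribedSum f R ≤ ε / 2 := by
    have h2 : 2 * ε1 * inscribedSum f R ≤ 2 * ε1 * V :=
      mul_le_mul_of_nonneg_left hRV (by positivity)
    have h3 : 2 * ε1 * V ≤ ε / 2 := by
      rw [hε1def, show 2 * (ε / (4 * (V + 1))) * V = ε * (2 * V) / (4 * (V + 1)) by ring,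
        div_le_div_iff₀ (by positivity) (by norm_num : (0:ℝ) < 2)]
      nlinarith
    linarith
  have h4 : D * (inscribedSum f R - inscribedSum f P) ≤ ε / 4 := by
    have h5 : inscribedSum f R - inscribedSum f P ≤ α := by linarith
    have h6 : D * (inscribedSum f R - inscribedSum f P) ≤ D * α :=
      mul_le_mul_of_nonneg_left h5 (le_of_lt hDpos)
    have h7 : D * α = ε / 4 := by
      rw [hDdef, hαdef]
      field_simp
      ring
    linarith
  rw [abs_sub_comm]
  linarith
end Main

section Final
variable {M : ℕ}

lemma pair_est {a b : ℝ} (hab : a < b) (f : ℝ → EuclideanSpace ℝ (Fin M))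
    (hcont : ContinuousOn f (Set.Icc a b)) (htop : curveLength f a b ≠ ⊤)
    (F : EuclideanSpace ℝ (Fin M) → EuclideanSpace ℝ (Fin M) → ℝ)
    (hF : IsParametricIntegrand F) {ε : ℝ} (hε : 0 < ε) :
    ∃ δ > (0:ℝ), ∀ P : IntervalPartition a b, P.mesh < δ →
      ∀ ξ : ℕ → ℝ, (∀ k < P.n, ξ k ∈ Set.Icc (P.y k) (P.y (k + 1))) →
      ∀ Q : IntervalPartition a b, Q.mesh < δ →
      ∀ η : ℕ → ℝ, (∀ k < Q.n, η k ∈ Set.Icc (Q.y k) (Q.y (k + 1))) →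
      |rsum F f P ξ - rsum F f Q η| ≤ ε := by
  obtain ⟨δ, hδ, hest⟩ := refine_est hab f hcont htop F hF (half_pos hε)
  refine ⟨δ, hδ, ?_⟩
  intro P hP ξ hξ Q hQ η hη
  set S : Finset ℝ := P.points ∪ Q.points with hSdef
  have haS : a ∈ S := Finset.mem_union_left _ P.a_mem_points
  have hbS : b ∈ S := Finset.mem_union_left _ P.b_mem_points
  have hIcc : ∀ t ∈ S, t ∈ Set.Icc a b := by
    intro t ht
    rcases Finset.mem_union.mp ht with h | h
    · exact P.points_subset_Icc t h
    · exact Q.points_subset_Icc t h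
  set R : IntervalPartition a b := IntervalPartition.ofFinset a b S haS hbS hIcc with hRdef
  have hRpts : R.points = S := IntervalPartition.ofFinset_points a b S haS hbS hIcc
  have hPR : P.points ⊆ R.points := by rw [hRpts]; exact Finset.subset_union_left
  have hQR : Q.points ⊆ R.points := by rw [hRpts]; exact Finset.subset_union_right
  have hζ : ∀ k < R.n, R.y k ∈ Set.Icc (R.y k) (R.y (k + 1)) := fun k _ =>
    ⟨le_rfl, R.y_mono (Nat.le_succ k)⟩
  have e1 := hest P hP ξ hξ R hPR R.y hζ
  have e2 := hest Q hQ η hη R hQR R.y hζ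
  calc |rsum F f P ξ - rsum F f Q η|
      ≤ |rsum F f P ξ - rsum F f R R.y| + |rsum F f R R.y - rsum F f Q η| := abs_sub_le _ _ _
    _ ≤ ε / 2 + ε / 2 := by
        rw [abs_sub_comm (rsum F f R R.y)]
        exact add_le_add e1 e2
    _ = ε := by ring

/-- The uniform partition of `[a,b]` into `k+1` pieces. -/
def unif (a b : ℝ) (hab : a < b) (k : ℕ) : IntervalPartition a b where
  n := k + 1
  x := fun i => a + (b - a) * i / (k + 1)
  mono := by
    intro i j hij
    have h1 : (i : ℝ) < (j : ℝ) := by exact_mod_cast hij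
    have hba : (0:ℝ) < b - a := sub_pos.mpr hab
    have hk : (0:ℝ) < (k:ℝ) + 1 := by positivity
    show a + (b - a) * i / (k + 1) < a + (b - a) * j / (k + 1)
    have h2 : (b - a) * i < (b - a) * j := by nlinarith
    have h3 := mul_lt_mul_of_pos_right h2 (inv_pos.mpr hk)
    rw [div_eq_mul_inv, div_eq_mul_inv]
    exact add_lt_add_right h3 a
  first := by simp
  last := by
    have hk : ((k:ℝ) + 1) ≠ 0 := by positivity
    show a + (b - a) * (Fin.last (k + 1) : ℕ) / (k + 1) = b
    rw [Fin.val_last]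
    push_cast
    field_simp
    ring

lemma unif_mesh_le (a b : ℝ) (hab : a < b) (k : ℕ) :
    (unif a b hab k).mesh ≤ (b - a) / (k + 1) := by
  haveI : Nonempty (Fin (unif a b hab k).n) := ⟨⟨0, Nat.succ_pos k⟩⟩
  refine ciSup_le fun i => ?_
  show a + (b - a) * ((i.succ : Fin (k + 2)) : ℕ) / (k + 1)
      - (a + (b - a) * ((i.castSucc : Fin (k + 2)) : ℕ) / (k + 1)) ≤ (b - a) / (k + 1)
  rw [Fin.val_succ, Fin.coe_castSucc]
  have hk : ((k:ℝ) + 1) ≠ 0 := by positivity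
  apply le_of_eq
  push_cast
  field_simp
  ring

lemma unif_mesh_lt {a b δ : ℝ} (hab : a < b) (hδ : 0 < δ) {N k : ℕ}
    (hN : (b - a) / δ < (N:ℝ)) (hk : N ≤ k) : (unif a b hab k).mesh < δ := by
  have h1 : (b - a) / ((k:ℝ) + 1) < δ := by
    rw [div_lt_iff₀ (by positivity)]
    rw [div_lt_iff₀ hδ] at hN
    have h2 : (N:ℝ) ≤ (k:ℝ) + 1 := by
      have : (N:ℝ) ≤ (k:ℝ) := by exact_mod_cast hk
      linarith
    nlinarith
  exact lt_of_le_of_lt (unif_mesh_le a b hab k) h1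

theorem lineIntegral_exists' (a b : ℝ) (hab : a < b)
    (f : ℝ → EuclideanSpace ℝ (Fin M))
    (hcont : ContinuousOn f (Set.Icc a b)) (hrect : curveLength f a b < ⊤)
    (F : EuclideanSpace ℝ (Fin M) → EuclideanSpace ℝ (Fin M) → ℝ)
    (hF : IsParametricIntegrand F) :
    ∃ L : ℝ, ∀ ε > (0 : ℝ), ∃ δ > (0 : ℝ), ∀ P : IntervalPartition a b, P.mesh < δ →
    ∀ ξ : Fin P.n → ℝ, (∀ i, ξ i ∈ Set.Icc (P.x i.castSucc) (P.x i.succ)) →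
    |(∑ i : Fin P.n, F (f (ξ i)) (f (P.x i.succ) - f (P.x i.castSucc))) - L| < ε := by
  have htop : curveLength f a b ≠ ⊤ := ne_of_lt hrect
  set s : ℕ → ℝ := fun k => rsum F f (unif a b hab k) ((unif a b hab k).y) with hsdef
  have hvalidU : ∀ k : ℕ, ∀ j < (unif a b hab k).n,
      (unif a b hab k).y j ∈ Set.Icc ((unif a b hab k).y j) ((unif a b hab k).y (j + 1)) :=
    fun k j _ => ⟨le_rfl, (unif a b hab k).y_mono (Nat.le_succ j)⟩
  have hcauchy : CauchySeq s := by
    rw [Metric.cauchySeq_iff]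
    intro ε hε
    obtain ⟨δ, hδ, hp⟩ := pair_est hab f hcont htop F hF (half_pos hε)
    obtain ⟨N, hN⟩ := exists_nat_gt ((b - a) / δ)
    refine ⟨N, fun m hm n' hn' => ?_⟩
    have h1 := hp _ (unif_mesh_lt hab hδ hN hm) _ (hvalidU m)
      _ (unif_mesh_lt hab hδ hN hn') _ (hvalidU n')
    rw [Real.dist_eq]
    calc |s m - s n'| ≤ ε / 2 := h1
      _ < ε := by linarith
  obtain ⟨L, hL⟩ := cauchySeq_tendsto_of_complete hcauchy
  refine ⟨L, ?_⟩
  intro ε hε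
  obtain ⟨δ, hδ, hp⟩ := pair_est hab f hcont htop F hF
    (show (0:ℝ) < ε / 4 by positivity)
  refine ⟨δ, hδ, ?_⟩
  intro P hmesh ξ hξ
  obtain ⟨N1, hN1⟩ := Metric.tendsto_atTop.mp hL (ε / 2) (by positivity)
  obtain ⟨N2, hN2⟩ := exists_nat_gt ((b - a) / δ)
  set k := max N1 N2 with hkdef
  have hmk : (unif a b hab k).mesh < δ := unif_mesh_lt hab hδ hN2 (le_max_right _ _)
  set ξ' : ℕ → ℝ := fun j => if h : j < P.n then ξ ⟨j, h⟩ else a with hξ'def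
  have hvalid' : ∀ j < P.n, ξ' j ∈ Set.Icc (P.y j) (P.y (j + 1)) := by
    intro j hj
    have h1 := hξ ⟨j, hj⟩
    rw [P.x_eq_y, P.x_eq_y] at h1
    simp only [hξ'def, dif_pos hj]
    exact h1
  have heq : (∑ i : Fin P.n, F (f (ξ i)) (f (P.x i.succ) - f (P.x i.castSucc)))
      = rsum F f P ξ' := by
    rw [rsum, ← Fin.sum_univ_eq_sum_range (fun j => F (f (ξ' j)) (f (P.y (j + 1)) - f (P.y j))) P.n]
    refine Finset.sum_congr rfl fun i _ => ?_
    rw [P.x_eq_y, P.x_eq_y, Fin.val_succ, Fin.coe_castSucc]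
    simp only [hξ'def, dif_pos i.isLt, Fin.eta]
  rw [heq]
  have e1 := hp P hmesh ξ' hvalid' _ hmk _ (hvalidU k)
  have e2 := hN1 k (le_max_left _ _)
  rw [Real.dist_eq] at e2
  calc |rsum F f P ξ' - L| ≤ |rsum F f P ξ' - s k| + |s k - L| := abs_sub_le _ _ _
    _ < ε := by
        have : |rsum F f P ξ' - s k| ≤ ε / 4 := e1
        linarith
end Final

/-- For a continuous rectifiable curve `C ↔ f : [a,b] → ℝ^M` and a parametric
integrand `F`, the line integral `∫_C F` exists: the tagged Riemann-type sums
`Σᵢ F(f(ξᵢ), f(xᵢ) − f(xᵢ₋₁))` converge as the mesh tends to `0`. -/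
theorem lineIntegral_exists {M : ℕ} (a b : ℝ) (hab : a < b)
    (f : ℝ → EuclideanSpace ℝ (Fin M))
    (hcont : ContinuousOn f (Set.Icc a b)) (hrect : curveLength f a b < ⊤)
    (F : EuclideanSpace ℝ (Fin M) → EuclideanSpace ℝ (Fin M) → ℝ)
    (hF : IsParametricIntegrand F) :
    ∃ L : ℝ, IsLineIntegral F f a b L := by
  obtain ⟨L, hL⟩ := lineIntegral_exists' a b hab f hcont hrect F hF
  exact ⟨L, hL⟩

end
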